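/- Let F be an infinite field, n ≥ 3, and let z_1,…,z_k be variables of nonzero degrees g_1,…,g_k ∈ Z_n with g_1 + ⋯ + g_k ≤ n − 1 (as integers in {1,…,n−1}), and y_1,…,y_t degree-0 variables. Then the commutators c = [z_1, a_1^{(1)}y_1,…,a_t^{(1)}y_t, z_2, a_1^{(2)}y_1,…,a_t^{(2)}y_t, …, z_k, a_1^{(k)}y_1,…,a_t^{(k)}y_t], over all choices of nonnegative integer exponents a_i^{(s)} (1 ≤ i ≤ t, 1 ≤ s ≤ k), are linearly independent modulo the ideal of Z_n-graded identities of UT_n(F)^{(-)} with its canonical Z_n-grading: no nontrivial F-linear combination of distinct such commutators is a Z_n-graded identity of UT_n(F)^{(-)}. -/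

import Mathlib

open FreeLieAlgebra

/-- The free `ℤ/n`-graded Lie algebra over `F`: the free Lie algebra on countably many
variables of each homogeneous degree `g : ZMod n`; the variable `(g, i)` is the `i`-th
variable of degree `g`. -/
abbrev FreeGLie (F : Type) [Field F] (n : ℕ) := FreeLieAlgebra F (ZMod n × ℕ)

/-- Homogeneous Lie monomials (bracket words) of degree `g`. -/
inductive HomWord (F : Type) [Field F] (n : ℕ) : ZMod n → FreeGLie F n → Prop
  | of (g : ZMod n) (i : ℕ) : HomWord F n g (FreeLieAlgebra.of F (g, i))
  | bracket {g h : ZMod n} {x y : FreeGLie F n} :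
      HomWord F n g x → HomWord F n h y → HomWord F n (g + h) ⁅x, y⁆

/-- The homogeneous component of degree `g` of the free graded Lie algebra. -/
noncomputable def homComp (F : Type) [Field F] (n : ℕ) (g : ZMod n) : Submodule F (FreeGLie F n) :=
  Submodule.span F {x | HomWord F n g x}

/-- A graded substitution sends each variable of degree `g` to a homogeneous element
of degree `g`; it induces a grading-preserving endomorphism via `FreeLieAlgebra.lift`,
and every grading-preserving endomorphism arises this way. -/
def IsGradedSubst (F : Type) [Field F] (n : ℕ) (s : ZMod n × ℕ → FreeGLie F n) : Prop :=
  ∀ g i, s (g, i) ∈ homComp F n g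

/-- `S` is a `T`-ideal: the carrier of a Lie ideal of the free graded Lie algebra which is
stable under all grading-preserving endomorphisms. -/
structure IsTIdeal (F : Type) [Field F] (n : ℕ) (S : Set (FreeGLie F n)) : Prop where
  isIdeal : ∃ J : LieIdeal F (FreeGLie F n), S = ↑J
  substClosed : ∀ s, IsGradedSubst F n s → ∀ x ∈ S, FreeLieAlgebra.lift F s x ∈ S

/-- The smallest `T`-ideal containing `S`. -/
def TClosure (F : Type) [Field F] (n : ℕ) (S : Set (FreeGLie F n)) : Set (FreeGLie F n) :=
  ⋂₀ {T | IsTIdeal F n T ∧ S ⊆ T}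

/-- The degree-`g` component of the canonical `ZMod n`-grading of `UT_n(F)⁽⁻⁾`:
the span of the matrix units `e_{ij}` with `i ≤ j` and `j - i = g` in `ZMod n`. -/
def Lcomp (F : Type) [Field F] (n : ℕ) (g : ZMod n) : Submodule F (Matrix (Fin n) (Fin n) F) :=
  Submodule.span F {A | ∃ i j : Fin n, i ≤ j ∧ ((j : ℕ) : ZMod n) - ((i : ℕ) : ZMod n) = g ∧
    A = Matrix.single i j 1}

attribute [local instance 100] LieRing.ofAssociativeRing

/-- The set of `ZMod n`-graded identities of `UT_n(F)⁽⁻⁾` (with commutator bracket),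
i.e. the elements of the free graded Lie algebra vanishing under every substitution that
sends each variable of degree `g` into the component `Lcomp F n g`. -/
def gradedId (F : Type) [Field F] (n : ℕ) : Set (FreeGLie F n) :=
  {f | ∀ v : ZMod n × ℕ → Matrix (Fin n) (Fin n) F,
    (∀ g i, v (g, i) ∈ Lcomp F n g) → FreeLieAlgebra.lift F v f = 0}

/-- The left-normed bracket `[x, l₁, l₂, …]`. -/
noncomputable def lnw (F : Type) [Field F] (n : ℕ) (x : FreeGLie F n)
    (l : List (FreeGLie F n)) : FreeGLie F n :=
  l.foldl (fun a b => ⁅a, b⁆) x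

/-- The degree-0 variable `y_i`. -/
noncomputable def yv (F : Type) [Field F] (n : ℕ) (i : ℕ) : FreeGLie F n :=
  FreeLieAlgebra.of F ((0 : ZMod n), i)

/-- The variable `z_j` of nonzero degree `g j` (the `j`-th of the `k+1` fixed variables of
nonzero degree; distinct `j` give distinct variables). -/
noncomputable def zvG (F : Type) [Field F] (n k : ℕ) (g : Fin (k + 1) → ZMod n)
    (j : Fin (k + 1)) : FreeGLie F n :=
  FreeLieAlgebra.of F (g j, j.val)

/-- The block of degree-0 variables `y_off, y_{off+1}, …` with multiplicities given by the
`s`-components of the tuples in the list `p`. -/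
noncomputable def ybT (F : Type) [Field F] (n k : ℕ) (s : Fin (k + 1)) :
    ℕ → List (Fin (k + 1) → ℕ) → List (FreeGLie F n)
  | _, [] => []
  | off, t :: rest => List.replicate (t s) (yv F n off) ++ ybT F n k s (off + 1) rest

/-- The element
`[z₁, a₁⁽¹⁾y₁,…,aₘ⁽¹⁾yₘ, z_{σ(2)}, a₁⁽²⁾y₁,…,aₘ⁽²⁾yₘ, …, z_{σ(k+1)}, a₁⁽ᵏ⁺¹⁾y₁,…,aₘ⁽ᵏ⁺¹⁾yₘ]`
of `B₍g₁,…,g_{k+1}₎`, where the `i`-th entry of the list `p` is the tuple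
`(aᵢ⁽¹⁾, …, aᵢ⁽ᵏ⁺¹⁾)` of exponents of `yᵢ`, so `p` is exactly the sequence `V` attached to
the element. -/
noncomputable def BgEl (F : Type) [Field F] (n k : ℕ) (g : Fin (k + 1) → ZMod n)
    (σ : Equiv.Perm (Fin (k + 1))) (p : List (Fin (k + 1) → ℕ)) : FreeGLie F n :=
  lnw F n (zvG F n k g 0)
    ((List.finRange (k + 1)).flatMap fun s =>
      (if s = 0 then [] else [zvG F n k g (σ s)]) ++ ybT F n k s 0 p)

/-- The element of `B₍g₁,…,g_{k+1}₎` with exponent matrix `a` (the variable `yᵢ` occurs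
`a i s` times in the block after the `s`-th `z`-variable), for a permutation `σ`. -/
noncomputable def BgF (F : Type) [Field F] (n k m : ℕ) (g : Fin (k + 1) → ZMod n)
    (σ : Equiv.Perm (Fin (k + 1))) (a : Fin m → Fin (k + 1) → ℕ) : FreeGLie F n :=
  BgEl F n k g σ ((List.finRange m).map a)


/-! ### Auxiliary material for the proof of `stmt17` -/

section Stmt17Aux

/-- The `t`-th degree as a natural number (`0` out of range). -/
def gvN (n k : ℕ) (g : Fin (k + 1) → ZMod n) (t : ℕ) : ℕ :=
  if h : t < k + 1 then (g ⟨t, h⟩).val else 0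

/-- Partial sums of the degrees. -/
def Qp (n k : ℕ) (g : Fin (k + 1) → ZMod n) (j : ℕ) : ℕ :=
  ∑ t ∈ Finset.range j, gvN n k g t

lemma Qp_zero (n k : ℕ) (g : Fin (k + 1) → ZMod n) : Qp n k g 0 = 0 :=
  Finset.sum_range_zero _

lemma Qp_succ (n k : ℕ) (g : Fin (k + 1) → ZMod n) (j : ℕ) :
    Qp n k g (j + 1) = Qp n k g j + gvN n k g j :=
  Finset.sum_range_succ _ _

lemma Qp_mono (n k : ℕ) (g : Fin (k + 1) → ZMod n) {j1 j2 : ℕ} (h : j1 ≤ j2) :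
    Qp n k g j1 ≤ Qp n k g j2 :=
  Finset.sum_le_sum_of_subset (Finset.range_subset_range.2 h)

lemma Qp_le_top (n k : ℕ) (g : Fin (k + 1) → ZMod n) (j : ℕ) :
    Qp n k g j ≤ Qp n k g (k + 1) := by
  induction j with
  | zero => rw [Qp_zero]; exact Nat.zero_le _
  | succ j ih =>
    rcases le_or_gt (j + 1) (k + 1) with hle | hlt
    · exact Qp_mono n k g hle
    · rw [Qp_succ, show gvN n k g j = 0 from dif_neg (by omega)]
      simpa using ih

lemma Qp_top (n k : ℕ) (g : Fin (k + 1) → ZMod n) :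
    Qp n k g (k + 1) = ∑ j : Fin (k + 1), (g j).val := by
  rw [Qp, ← Fin.sum_univ_eq_sum_range]
  exact Finset.sum_congr rfl fun j _ => by simp [gvN, j.isLt]

lemma Qp_strict (n k : ℕ) (g : Fin (k + 1) → ZMod n)
    (hval : ∀ j : Fin (k + 1), 0 < (g j).val) {j1 j2 : ℕ}
    (h : j1 < j2) (h2 : j2 ≤ k + 1) : Qp n k g j1 < Qp n k g j2 := by
  have h3 : j1 < k + 1 := by omega
  have h4 : Qp n k g j1 < Qp n k g (j1 + 1) := by
    rw [Qp_succ, show gvN n k g j1 = (g ⟨j1, h3⟩).val from dif_pos h3]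
    have := hval ⟨j1, h3⟩; omega
  exact lt_of_lt_of_le h4 (Qp_mono n k g h)

/-- The `Fin n` version of `Qp`. -/
def qFin (n k : ℕ) (g : Fin (k + 1) → ZMod n) (hQ : ∀ j, Qp n k g j < n) (j : ℕ) : Fin n :=
  ⟨Qp n k g j, hQ j⟩

/-- The diagonal matrix with entry `t i s` at the position `Qp (s+1)`. -/
noncomputable def Dmat (F : Type) [Field F] (n k m : ℕ) (g : Fin (k + 1) → ZMod n)
    (hQ : ∀ j, Qp n k g j < n) (t : Fin m → Fin (k + 1) → F) (i : Fin m) :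
    Matrix (Fin n) (Fin n) F :=
  ∑ s : Fin (k + 1),
    t i s • Matrix.single (qFin n k g hQ (s.val + 1)) (qFin n k g hQ (s.val + 1)) 1

/-- The substitution used to separate the elements of the spanning set. -/
noncomputable def subst (F : Type) [Field F] (n k m : ℕ) (g : Fin (k + 1) → ZMod n)
    (hQ : ∀ j, Qp n k g j < n) (t : Fin m → Fin (k + 1) → F) :
    ZMod n × ℕ → Matrix (Fin n) (Fin n) F := fun x =>
  if x.1 = 0 then
    (if hi : x.2 < m then Dmat F n k m g hQ t ⟨x.2, hi⟩ else 0)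
  else if hik : x.2 < k + 1 then
    (if x.1 = g ⟨x.2, hik⟩ then
      Matrix.single (qFin n k g hQ x.2) (qFin n k g hQ (x.2 + 1)) 1 else 0)
  else 0

lemma Dmat_mem (F : Type) [Field F] (n k m : ℕ) (g : Fin (k + 1) → ZMod n)
    (hQ : ∀ j, Qp n k g j < n) (t : Fin m → Fin (k + 1) → F) (i : Fin m) :
    Dmat F n k m g hQ t i ∈ Lcomp F n 0 :=
  Submodule.sum_mem _ fun s _ => Submodule.smul_mem _ _
    (Submodule.subset_span ⟨_, _, le_rfl, by simp, rfl⟩)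

lemma subst_mem (F : Type) [Field F] (n k m : ℕ) [NeZero n] (g : Fin (k + 1) → ZMod n)
    (hQ : ∀ j, Qp n k g j < n) (t : Fin m → Fin (k + 1) → F) :
    ∀ (gd : ZMod n) (i : ℕ), subst F n k m g hQ t (gd, i) ∈ Lcomp F n gd := by
  intro gd i
  simp only [subst]
  by_cases h0 : gd = 0
  · subst h0
    rw [if_pos rfl]
    split
    · exact Dmat_mem F n k m g hQ t _
    · exact Submodule.zero_mem _
  · rw [if_neg h0]
    split
    next hik =>
      split
      next heq =>
        apply Submodule.subset_span
        refine ⟨qFin n k g hQ i, qFin n k g hQ (i + 1), ?_, ?_, rfl⟩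
        · exact Fin.mk_le_mk.2 (Qp_mono n k g (Nat.le_succ i))
        · show ((Qp n k g (i + 1) : ℕ) : ZMod n) - ((Qp n k g i : ℕ) : ZMod n) = gd
          rw [Qp_succ, show gvN n k g i = (g ⟨i, hik⟩).val from dif_pos hik]
          push_cast
          rw [add_sub_cancel_left, heq]
          simp [ZMod.natCast_val, ZMod.cast_id]
      next => exact Submodule.zero_mem _
    next => exact Submodule.zero_mem _

lemma subst_y (F : Type) [Field F] (n k m : ℕ) (g : Fin (k + 1) → ZMod n)
    (hQ : ∀ j, Qp n k g j < n) (t : Fin m → Fin (k + 1) → F) (i : Fin m) :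
    subst F n k m g hQ t ((0 : ZMod n), i.val) = Dmat F n k m g hQ t i := by
  simp [subst, i.isLt]

lemma subst_z (F : Type) [Field F] (n k m : ℕ) (g : Fin (k + 1) → ZMod n)
    (hQ : ∀ j, Qp n k g j < n) (t : Fin m → Fin (k + 1) → F) (j : Fin (k + 1))
    (hgj : g j ≠ 0) :
    subst F n k m g hQ t (g j, j.val)
      = Matrix.single (qFin n k g hQ j.val) (qFin n k g hQ (j.val + 1)) 1 := by
  simp [subst, hgj, j.isLt]

lemma brD (F : Type) [Field F] (n k m : ℕ) (g : Fin (k + 1) → ZMod n)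
    (hQ : ∀ j, Qp n k g j < n) (hval : ∀ j : Fin (k + 1), 0 < (g j).val)
    (t : Fin m → Fin (k + 1) → F) (c : F) (i : Fin m) (sb : Fin (k + 1)) :
    ⁅c • Matrix.single (qFin n k g hQ 0) (qFin n k g hQ (sb.val + 1)) (1 : F),
      Dmat F n k m g hQ t i⁆
      = (c * t i sb) •
        Matrix.single (qFin n k g hQ 0) (qFin n k g hQ (sb.val + 1)) 1 := by
  have hne0 : ∀ s : Fin (k + 1), qFin n k g hQ (s.val + 1) ≠ qFin n k g hQ 0 := by
    intro s hfe
    have h1 := Qp_strict n k g hval (show 0 < s.val + 1 by omega) s.isLt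
    have h2 : Qp n k g (s.val + 1) = Qp n k g 0 := congrArg Fin.val hfe
    omega
  have hinj : ∀ s : Fin (k + 1), s ≠ sb →
      qFin n k g hQ (sb.val + 1) ≠ qFin n k g hQ (s.val + 1) := by
    intro s hs hfe
    have h2 : Qp n k g (sb.val + 1) = Qp n k g (s.val + 1) := congrArg Fin.val hfe
    have hne : sb.val ≠ s.val := fun hv => hs (Fin.ext hv.symm)
    rcases Nat.lt_or_ge sb.val s.val with hlt | hge
    · have := Qp_strict n k g hval (show sb.val + 1 < s.val + 1 by omega) s.isLt
      omega
    · have := Qp_strict n k g hval (show s.val + 1 < sb.val + 1 by omega) sb.isLt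
      omega
  have hED : Matrix.single (qFin n k g hQ 0) (qFin n k g hQ (sb.val + 1)) (1 : F) *
      Dmat F n k m g hQ t i
      = t i sb • Matrix.single (qFin n k g hQ 0) (qFin n k g hQ (sb.val + 1)) 1 := by
    rw [Dmat, Finset.mul_sum, Finset.sum_eq_single sb]
    · rw [mul_smul_comm, Matrix.single_mul_single_same, one_mul]
    · intro s _ hs
      rw [mul_smul_comm, Matrix.single_mul_single_of_ne (h := hinj s hs), smul_zero]
    · intro hsb; exact absurd (Finset.mem_univ sb) hsb
  have hDE : Dmat F n k m g hQ t i *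
      Matrix.single (qFin n k g hQ 0) (qFin n k g hQ (sb.val + 1)) (1 : F) = 0 := by
    rw [Dmat, Finset.sum_mul]
    refine Finset.sum_eq_zero fun s _ => ?_
    rw [smul_mul_assoc, Matrix.single_mul_single_of_ne (h := hne0 s), smul_zero]
  rw [Ring.lie_def, smul_mul_assoc, mul_smul_comm, hED, hDE, smul_zero, sub_zero, smul_smul]

lemma brE (F : Type) [Field F] (n k : ℕ) (g : Fin (k + 1) → ZMod n)
    (hQ : ∀ j, Qp n k g j < n) (hval : ∀ j : Fin (k + 1), 0 < (g j).val)
    (c : F) (u : ℕ) (hu1 : 1 ≤ u) (huk : u + 1 ≤ k + 1) :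
    ⁅c • Matrix.single (qFin n k g hQ 0) (qFin n k g hQ u) (1 : F),
      Matrix.single (qFin n k g hQ u) (qFin n k g hQ (u + 1)) (1 : F)⁆
      = c • Matrix.single (qFin n k g hQ 0) (qFin n k g hQ (u + 1)) 1 := by
  have h0 : qFin n k g hQ (u + 1) ≠ qFin n k g hQ 0 := by
    intro hfe
    have h1 := Qp_strict n k g hval (show 0 < u + 1 by omega) huk
    have h2 : Qp n k g (u + 1) = Qp n k g 0 := congrArg Fin.val hfe
    omega
  rw [Ring.lie_def, smul_mul_assoc, mul_smul_comm, Matrix.single_mul_single_same, one_mul,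
    Matrix.single_mul_single_of_ne (h := h0), smul_zero, sub_zero]

/-- The scalar factor produced by a `y`-block. -/
noncomputable def yfac (F : Type) [Field F] (k m : ℕ) (t : Fin m → Fin (k + 1) → F)
    (sb : Fin (k + 1)) : ℕ → List (Fin (k + 1) → ℕ) → F
  | _, [] => 1
  | off, a :: rest =>
    (if h : off < m then t ⟨off, h⟩ sb ^ a sb else 1) * yfac F k m t sb (off + 1) rest

lemma yfac_nil (F : Type) [Field F] (k m : ℕ) (t : Fin m → Fin (k + 1) → F)
    (sb : Fin (k + 1)) (off : ℕ) : yfac F k m t sb off [] = 1 := rfl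

lemma yfac_cons (F : Type) [Field F] (k m : ℕ) (t : Fin m → Fin (k + 1) → F)
    (sb : Fin (k + 1)) (off : ℕ) (a : Fin (k + 1) → ℕ) (rest : List (Fin (k + 1) → ℕ)) :
    yfac F k m t sb off (a :: rest)
      = (if h : off < m then t ⟨off, h⟩ sb ^ a sb else 1) * yfac F k m t sb (off + 1) rest :=
  rfl

lemma ybT_nil (F : Type) [Field F] (n k : ℕ) (s : Fin (k + 1)) (off : ℕ) :
    ybT F n k s off [] = [] := rfl

lemma ybT_cons (F : Type) [Field F] (n k : ℕ) (s : Fin (k + 1)) (off : ℕ)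
    (a : Fin (k + 1) → ℕ) (rest : List (Fin (k + 1) → ℕ)) :
    ybT F n k s off (a :: rest) = List.replicate (a s) (yv F n off) ++ ybT F n k s (off + 1) rest :=
  rfl

lemma lift_lnw (F : Type) [Field F] (n : ℕ) (v : ZMod n × ℕ → Matrix (Fin n) (Fin n) F)
    (x : FreeGLie F n) (l : List (FreeGLie F n)) :
    FreeLieAlgebra.lift F v (lnw F n x l)
      = List.foldl (fun a b => ⁅a, b⁆) (FreeLieAlgebra.lift F v x)
          (l.map (FreeLieAlgebra.lift F v)) := by
  induction l generalizing x with
  | nil => rfl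
  | cons b l ih =>
    show FreeLieAlgebra.lift F v (lnw F n ⁅x, b⁆ l) = _
    rw [ih, List.map_cons, List.foldl_cons, LieHom.map_lie]

lemma fold_rep (F : Type) [Field F] (n k m : ℕ) (g : Fin (k + 1) → ZMod n)
    (hQ : ∀ j, Qp n k g j < n) (hval : ∀ j : Fin (k + 1), 0 < (g j).val)
    (t : Fin m → Fin (k + 1) → F) (i : Fin m) (sb : Fin (k + 1)) (r : ℕ) (c : F) :
    List.foldl (fun a b => ⁅a, b⁆)
      (c • Matrix.single (qFin n k g hQ 0) (qFin n k g hQ (sb.val + 1)) 1)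
      (List.replicate r (Dmat F n k m g hQ t i))
      = (c * t i sb ^ r) •
        Matrix.single (qFin n k g hQ 0) (qFin n k g hQ (sb.val + 1)) 1 := by
  induction r generalizing c with
  | zero => simp
  | succ r ih =>
    rw [List.replicate_succ, List.foldl_cons]
    rw [brD F n k m g hQ hval t c i sb, ih]
    congr 1
    ring

lemma fold_ybT (F : Type) [Field F] (n k m : ℕ) (g : Fin (k + 1) → ZMod n)
    (hQ : ∀ j, Qp n k g j < n) (hval : ∀ j : Fin (k + 1), 0 < (g j).val)
    (t : Fin m → Fin (k + 1) → F) (sb : Fin (k + 1)) (p : List (Fin (k + 1) → ℕ)) :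
    ∀ (off : ℕ) (c : F), off + p.length ≤ m →
    List.foldl (fun a b => ⁅a, b⁆)
      (c • Matrix.single (qFin n k g hQ 0) (qFin n k g hQ (sb.val + 1)) 1)
      ((ybT F n k sb off p).map (FreeLieAlgebra.lift F (subst F n k m g hQ t)))
      = (c * yfac F k m t sb off p) •
        Matrix.single (qFin n k g hQ 0) (qFin n k g hQ (sb.val + 1)) 1 := by
  induction p with
  | nil => intro off c _; simp [ybT_nil, yfac_nil]
  | cons a rest ih =>
    intro off c hlen
    simp only [List.length_cons] at hlen
    have hoff : off < m := by omega
    rw [ybT_cons, List.map_append, List.foldl_append, List.map_replicate, yv,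
      FreeLieAlgebra.lift_of_apply]
    have hsub : subst F n k m g hQ t ((0 : ZMod n), off) = Dmat F n k m g hQ t ⟨off, hoff⟩ :=
      subst_y F n k m g hQ t ⟨off, hoff⟩
    rw [hsub, fold_rep F n k m g hQ hval t ⟨off, hoff⟩ sb (a sb) c,
      ih (off + 1) _ (by omega), yfac_cons, dif_pos hoff]
    congr 1
    ring

lemma yfac_drop (F : Type) [Field F] (k m : ℕ) (t : Fin m → Fin (k + 1) → F)
    (sb : Fin (k + 1)) (a : Fin m → Fin (k + 1) → ℕ) :
    ∀ (d j : ℕ), j + d = m →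
    yfac F k m t sb j (((List.finRange m).map a).drop j)
      = ∏ i ∈ Finset.univ.filter (fun i : Fin m => j ≤ i.val), t i sb ^ a i sb := by
  intro d
  induction d with
  | zero =>
    intro j hj
    have hj' : j = m := by omega
    rw [hj', List.drop_eq_nil_of_le (by simp), yfac_nil,
      show Finset.univ.filter (fun i : Fin m => m ≤ i.val) = ∅ from by
        ext i
        simp only [Finset.mem_filter, Finset.mem_univ, true_and, Finset.notMem_empty,
          iff_false, not_le]
        exact i.isLt,
      Finset.prod_empty]
  | succ d ihd =>
    intro j hj
    have hjm : j < m := by omega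
    have hl : (((List.finRange m).map a)).drop j
        = a ⟨j, hjm⟩ :: ((List.finRange m).map a).drop (j + 1) := by
      rw [List.drop_eq_getElem_cons (by simpa using hjm)]
      congr 1
      rw [List.getElem_map]
      exact congrArg a (Fin.ext (by simp))
    rw [hl, yfac_cons, dif_pos hjm, ihd (j + 1) (by omega),
      show Finset.univ.filter (fun i : Fin m => j ≤ i.val)
        = insert (⟨j, hjm⟩ : Fin m)
            (Finset.univ.filter (fun i : Fin m => j + 1 ≤ i.val)) from by
        ext i
        simp only [Finset.mem_filter, Finset.mem_univ, true_and, Finset.mem_insert, Fin.ext_iff]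
        omega,
      Finset.prod_insert (by simp)]

lemma yfac_closed (F : Type) [Field F] (k m : ℕ) (t : Fin m → Fin (k + 1) → F)
    (sb : Fin (k + 1)) (a : Fin m → Fin (k + 1) → ℕ) :
    yfac F k m t sb 0 ((List.finRange m).map a) = ∏ i : Fin m, t i sb ^ a i sb := by
  have hd := yfac_drop F k m t sb a m 0 (by omega)
  simpa using hd

lemma main_fold (F : Type) [Field F] (n k m : ℕ) (g : Fin (k + 1) → ZMod n)
    (hQ : ∀ j, Qp n k g j < n) (hval : ∀ j : Fin (k + 1), 0 < (g j).val)
    (hg : ∀ j, g j ≠ 0) (t : Fin m → Fin (k + 1) → F) (p : List (Fin (k + 1) → ℕ))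
    (hp : p.length ≤ m) :
    ∀ (j : ℕ), 1 ≤ j → j ≤ k + 1 →
    List.foldl (fun a b => ⁅a, b⁆)
      (Matrix.single (qFin n k g hQ 0) (qFin n k g hQ 1) 1)
      ((((List.finRange (k + 1)).take j).flatMap fun s =>
          (if s = 0 then [] else [zvG F n k g s]) ++ ybT F n k s 0 p).map
        (FreeLieAlgebra.lift F (subst F n k m g hQ t)))
      = (∏ sb ∈ Finset.univ.filter (fun sb : Fin (k + 1) => sb.val < j),
          yfac F k m t sb 0 p) •
        Matrix.single (qFin n k g hQ 0) (qFin n k g hQ j) 1 := by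
  intro j
  induction j with
  | zero => omega
  | succ j ih =>
    intro _ hjk
    rcases Nat.eq_zero_or_pos j with hj0 | hj1
    · subst hj0
      simp only [Nat.zero_add]
      have htake : (List.finRange (k + 1)).take 1 = [(0 : Fin (k + 1))] := by
        rw [List.finRange_succ]; rfl
      rw [htake, show (([(0 : Fin (k + 1))]).flatMap fun s =>
          (if s = 0 then [] else [zvG F n k g s]) ++ ybT F n k s 0 p) = ybT F n k 0 0 p from by
        simp]
      have hfold := fold_ybT F n k m g hQ hval t 0 p 0 (1 : F) (by omega)
      simp only [Fin.val_zero, Nat.zero_add, one_mul] at hfold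
      rw [show Finset.univ.filter (fun sb : Fin (k + 1) => sb.val < 1) = {(0 : Fin (k + 1))}
          from by
        ext sb
        simp only [Finset.mem_filter, Finset.mem_univ, true_and, Finset.mem_singleton,
          Fin.ext_iff, Fin.val_zero]
        omega,
        Finset.prod_singleton, ← hfold, one_smul]
    · have hstep := ih hj1 (by omega)
      have hjk1 : j < k + 1 := by omega
      have htake : (List.finRange (k + 1)).take (j + 1)
          = (List.finRange (k + 1)).take j ++ [(⟨j, hjk1⟩ : Fin (k + 1))] := by
        rw [List.take_succ, List.getElem?_eq_getElem (by simpa using hjk1)]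
        congr 1
        simp only [Option.toList_some, List.cons.injEq, and_true]
        exact Fin.ext (by simp)
      rw [htake, List.flatMap_append, List.map_append, List.foldl_append, hstep,
        List.flatMap_cons, List.flatMap_nil, List.append_nil,
        if_neg (show (⟨j, hjk1⟩ : Fin (k + 1)) ≠ 0 from by
          simp only [ne_eq, Fin.ext_iff, Fin.val_zero]; omega),
        List.singleton_append, List.map_cons, List.foldl_cons]
      rw [show FreeLieAlgebra.lift F (subst F n k m g hQ t) (zvG F n k g ⟨j, hjk1⟩)
          = Matrix.single (qFin n k g hQ j) (qFin n k g hQ (j + 1)) 1 from by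
        rw [zvG, FreeLieAlgebra.lift_of_apply]
        exact subst_z F n k m g hQ t ⟨j, hjk1⟩ (hg _)]
      rw [brE F n k g hQ hval _ j hj1 hjk]
      have hfold := fold_ybT F n k m g hQ hval t ⟨j, hjk1⟩ p 0
        (∏ sb ∈ Finset.univ.filter (fun sb : Fin (k + 1) => sb.val < j), yfac F k m t sb 0 p)
        (by omega)
      rw [hfold]
      rw [show Finset.univ.filter (fun sb : Fin (k + 1) => sb.val < j + 1)
          = insert (⟨j, hjk1⟩ : Fin (k + 1))
              (Finset.univ.filter (fun sb : Fin (k + 1) => sb.val < j)) from by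
        ext sb
        simp only [Finset.mem_filter, Finset.mem_univ, true_and, Finset.mem_insert, Fin.ext_iff]
        omega,
        Finset.prod_insert (by simp)]
      congr 1
      ring

end Stmt17Aux

/-- Let `n ≥ 3` and `z₁,…,z_{k+1}` have nonzero degrees `g₁,…,g_{k+1}`
with `g₁ + ⋯ + g_{k+1} ≤ n - 1` (as integers in `{1,…,n-1}`). The commutators
`[z₁, a₁⁽¹⁾y₁,…,aₘ⁽¹⁾yₘ, z₂, a₁⁽²⁾y₁,…,aₘ⁽²⁾yₘ, …, z_{k+1}, a₁⁽ᵏ⁺¹⁾y₁,…,aₘ⁽ᵏ⁺¹⁾yₘ]`, over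
all choices of nonnegative exponent matrices `a`, are linearly independent modulo the ideal
of `ZMod n`-graded identities of `UT_n(F)⁽⁻⁾`: no nontrivial `F`-linear combination of
distinct such commutators is a graded identity of `UT_n(F)⁽⁻⁾`. -/
theorem stmt17 (F : Type) [Field F] [Infinite F] (n k m : ℕ) (hn : 3 ≤ n)
    (g : Fin (k + 1) → ZMod n) (hg : ∀ j, g j ≠ 0) (hsum : ∑ j, (g j).val ≤ n - 1)
    (s : Finset (Fin m → Fin (k + 1) → ℕ)) (c : (Fin m → Fin (k + 1) → ℕ) → F)
    (h : (∑ a ∈ s, c a • BgF F n k m g 1 a) ∈ gradedId F n) :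
    ∀ a ∈ s, c a = 0 := by
  haveI : NeZero n := ⟨by omega⟩
  have hval : ∀ j : Fin (k + 1), 0 < (g j).val := by
    intro j
    rcases Nat.eq_zero_or_pos (g j).val with h0 | h1
    · exact absurd ((ZMod.val_eq_zero _).mp h0) (hg j)
    · exact h1
  have hQ : ∀ j, Qp n k g j < n := by
    intro j
    have h1 := Qp_le_top n k g j
    have h2 := Qp_top n k g
    omega
  have key : ∀ t : Fin m → Fin (k + 1) → F,
      ∑ a ∈ s, c a * ∏ sb : Fin (k + 1), ∏ i : Fin m, t i sb ^ a i sb = 0 := by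
    intro t
    have h2 := h (subst F n k m g hQ t) (fun gd i => subst_mem F n k m g hQ t gd i)
    have hBg : ∀ a : Fin m → Fin (k + 1) → ℕ,
        FreeLieAlgebra.lift F (subst F n k m g hQ t) (BgF F n k m g 1 a)
          = (∏ sb : Fin (k + 1), ∏ i : Fin m, t i sb ^ a i sb) •
            Matrix.single (qFin n k g hQ 0) (qFin n k g hQ (k + 1)) 1 := by
      intro a
      unfold BgF BgEl
      rw [lift_lnw]
      have hz0 : FreeLieAlgebra.lift F (subst F n k m g hQ t) (zvG F n k g 0)
          = Matrix.single (qFin n k g hQ 0) (qFin n k g hQ 1) 1 := by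
        rw [zvG, FreeLieAlgebra.lift_of_apply]
        have hsz := subst_z F n k m g hQ t 0 (hg 0)
        simpa using hsz
      rw [hz0]
      simp only [Equiv.Perm.coe_one, id_eq]
      rw [show List.finRange (k + 1) = (List.finRange (k + 1)).take (k + 1) from
        (List.take_of_length_le (by simp)).symm]
      rw [main_fold F n k m g hQ hval hg t ((List.finRange m).map a) (by simp) (k + 1)
        (by omega) le_rfl]
      rw [show Finset.univ.filter (fun sb : Fin (k + 1) => sb.val < k + 1) = Finset.univ from
        by ext sb; simp [sb.isLt]; omega]
      congr 1
      exact Finset.prod_congr rfl fun sb _ => yfac_closed F k m t sb a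
    have hsum : FreeLieAlgebra.lift F (subst F n k m g hQ t) (∑ a ∈ s, c a • BgF F n k m g 1 a)
        = ∑ a ∈ s, c a •
            FreeLieAlgebra.lift F (subst F n k m g hQ t) (BgF F n k m g 1 a) := by
      rw [← LieHom.coe_toLinearMap, map_sum]
      exact Finset.sum_congr rfl fun a _ => by rw [map_smul]
    rw [hsum] at h2
    simp_rw [hBg, smul_smul] at h2
    rw [← Finset.sum_smul] at h2
    have hE : Matrix.single (qFin n k g hQ 0) (qFin n k g hQ (k + 1)) (1 : F) ≠ 0 := by
      intro hc
      have hcc := congrFun (congrFun hc (qFin n k g hQ 0)) (qFin n k g hQ (k + 1))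
      rw [Matrix.single_apply_same] at hcc
      simp at hcc
    rcases smul_eq_zero.mp h2 with h4 | h4
    · exact h4
    · exact absurd h4 hE
  classical
  set ex : (Fin m → Fin (k + 1) → ℕ) → ((Fin m × Fin (k + 1)) →₀ ℕ) :=
    fun a => Finsupp.equivFunOnFinite.symm fun x => a x.1 x.2 with hex
  have hexinj : Function.Injective ex := by
    intro a b hab
    have hfe := Finsupp.equivFunOnFinite.symm.injective hab
    funext i sb
    exact congrFun hfe (i, sb)
  set P : MvPolynomial (Fin m × Fin (k + 1)) F :=
    ∑ a ∈ s, MvPolynomial.monomial (ex a) (c a) with hP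
  have hPz : P = 0 := by
    apply MvPolynomial.funext
    intro x
    rw [map_zero, hP, map_sum, ← key fun i sb => x (i, sb)]
    refine Finset.sum_congr rfl fun a _ => ?_
    rw [MvPolynomial.eval_monomial, Finsupp.prod_pow]
    congr 1
    rw [Fintype.prod_prod_type, Finset.prod_comm]
    exact Finset.prod_congr rfl fun sb _ => Finset.prod_congr rfl fun i _ => by
      simp [hex]
  intro a ha
  have hcoe := congrArg (MvPolynomial.coeff (ex a)) hPz
  rw [MvPolynomial.coeff_zero, hP, MvPolynomial.coeff_sum, Finset.sum_eq_single a
    (fun b _ hba => by rw [MvPolynomial.coeff_monomial, if_neg (fun hEq => hba (hexinj hEq))])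
    (fun hna => absurd ha hna)] at hcoe
  rwa [MvPolynomial.coeff_monomial, if_pos rfl] at hcoe
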